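/- In the annulus 1 ≤ x²+y² ≤ 16, the five fields G, C, h_n, h_t, η of the exact decomposition above are pairwise L²-orthogonal: ∫_M G·C = ∫_M G·h_n = ∫_M G·h_t = ∫_M G·η = ∫_M C·h_n = ∫_M C·h_t = ∫_M C·η = ∫_M h_n·h_t = ∫_M h_n·η = ∫_M h_t·η = 0. -/

import Mathlib

open MeasureTheory

noncomputable def cAnn : ℝ := 15 / Real.log 4

/-- The annulus 1 ≤ x²+y² ≤ 16. -/
def annulus : Set (ℝ × ℝ) :=
  {p | 1 ≤ p.1 ^ 2 + p.2 ^ 2 ∧ p.1 ^ 2 + p.2 ^ 2 ≤ 16}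

noncomputable def Gf (p : ℝ × ℝ) : ℝ × ℝ :=
  (2 * p.1 - cAnn * p.1 / (p.1 ^ 2 + p.2 ^ 2),
   2 * p.2 - cAnn * p.2 / (p.1 ^ 2 + p.2 ^ 2))

noncomputable def Cf (p : ℝ × ℝ) : ℝ × ℝ :=
  (-(2 * p.2) + cAnn * p.2 / (p.1 ^ 2 + p.2 ^ 2),
   2 * p.1 - cAnn * p.1 / (p.1 ^ 2 + p.2 ^ 2))

noncomputable def hnf (p : ℝ × ℝ) : ℝ × ℝ :=
  (cAnn * p.1 / (p.1 ^ 2 + p.2 ^ 2), cAnn * p.2 / (p.1 ^ 2 + p.2 ^ 2))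

noncomputable def htf (p : ℝ × ℝ) : ℝ × ℝ :=
  (cAnn * (-p.2) / (p.1 ^ 2 + p.2 ^ 2), cAnn * p.1 / (p.1 ^ 2 + p.2 ^ 2))

noncomputable def etaf (_ : ℝ × ℝ) : ℝ × ℝ := (1, 1)

/-- Euclidean dot product on ℝ². -/
def dot2 (a b : ℝ × ℝ) : ℝ := a.1 * b.1 + a.2 * b.2

open Set

lemma meas_ann : MeasurableSet annulus := by
  apply MeasurableSet.inter
  · exact measurableSet_le measurable_const
      ((measurable_fst.pow_const 2).add (measurable_snd.pow_const 2))
  · exact measurableSet_le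
      ((measurable_fst.pow_const 2).add (measurable_snd.pow_const 2)) measurable_const

/-- Integral of an odd function over the (symmetric) annulus vanishes. -/
lemma odd_int (f : ℝ × ℝ → ℝ) (hf : ∀ p, f (-p) = - f p) :
    (∫ p in annulus, f p) = 0 := by
  have hs : ∀ p : ℝ × ℝ, -p ∈ annulus ↔ p ∈ annulus := by
    intro p; simp [annulus]
  have h1 : (∫ p in annulus, f p) = ∫ p, annulus.indicator f p :=
    (integral_indicator meas_ann).symm
  have h2 : (∫ p, annulus.indicator f p) = ∫ p, annulus.indicator f (-p) :=
    (integral_neg_eq_self (annulus.indicator f) volume).symm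
  have h3 : ∀ p : ℝ × ℝ, annulus.indicator f (-p) = - annulus.indicator f p := by
    intro p
    by_cases hp : p ∈ annulus
    · rw [indicator_of_mem ((hs p).mpr hp), indicator_of_mem hp, hf]
    · rw [indicator_of_notMem (fun h => hp ((hs p).mp h)), indicator_of_notMem hp, neg_zero]
  have hkey : (∫ p, annulus.indicator f p) = - ∫ p, annulus.indicator f p := by
    calc (∫ p, annulus.indicator f p) = ∫ p, annulus.indicator f (-p) := h2
      _ = ∫ p, - annulus.indicator f p := by simp_rw [h3]
      _ = - ∫ p, annulus.indicator f p := integral_neg _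
  rw [h1]; linarith [hkey, h1]

lemma rect_int : (∫ p in Icc (1:ℝ) 4 ×ˢ Ioo (-Real.pi) Real.pi,
    (2 * cAnn * p.1 - cAnn ^ 2 / p.1)) = 0 := by
  have hprod : (∫ p in Icc (1:ℝ) 4 ×ˢ Ioo (-Real.pi) Real.pi,
      (2 * cAnn * p.1 - cAnn ^ 2 / p.1))
    = (∫ x in Icc (1:ℝ) 4, (2 * cAnn * x - cAnn ^ 2 / x)) *
        ∫ _ in Ioo (-Real.pi) Real.pi, (1:ℝ) := by
    rw [Measure.volume_eq_prod]
    rw [show (fun p : ℝ × ℝ => 2 * cAnn * p.1 - cAnn ^ 2 / p.1)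
        = fun p : ℝ × ℝ => (2 * cAnn * p.1 - cAnn ^ 2 / p.1) * (fun _ : ℝ => (1:ℝ)) p.2 by
      funext p; simp]
    rw [setIntegral_prod_mul (μ := (volume : Measure ℝ)) (ν := (volume : Measure ℝ))
      (fun x => 2 * cAnn * x - cAnn ^ 2 / x) (fun _ => (1:ℝ)) _ _]
  rw [hprod]
  have h1 : (∫ x in Icc (1:ℝ) 4, (2 * cAnn * x - cAnn ^ 2 / x)) = 0 := by
    rw [integral_Icc_eq_integral_Ioc, ← intervalIntegral.integral_of_le (by norm_num : (1:ℝ) ≤ 4)]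
    have hlog : (∫ x in (1:ℝ)..4, 1 / x) = Real.log 4 := by
      rw [integral_one_div (by rw [Set.uIcc_of_le (by norm_num)]; simp : (0:ℝ) ∉ Set.uIcc 1 4)]
      norm_num
    have hx : (∫ x in (1:ℝ)..4, x) = 15 / 2 := by
      rw [integral_id]; norm_num
    have hint1 : IntervalIntegrable (fun x : ℝ => 2 * cAnn * x) volume 1 4 :=
      (continuous_const.mul continuous_id).intervalIntegrable 1 4
    have hint2 : IntervalIntegrable (fun x : ℝ => cAnn ^ 2 / x) volume 1 4 := by
      apply ContinuousOn.intervalIntegrable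
      apply ContinuousOn.div continuousOn_const continuousOn_id
      intro x hx'
      rw [Set.uIcc_of_le (by norm_num)] at hx'
      exact ne_of_gt (lt_of_lt_of_le zero_lt_one hx'.1)
    have hi : (∫ x in (1:ℝ)..4, (2 * cAnn * x - cAnn ^ 2 / x))
        = 2 * cAnn * (15/2) - cAnn ^ 2 * Real.log 4 := by
      rw [intervalIntegral.integral_sub hint1 hint2,
        intervalIntegral.integral_const_mul, hx]
      congr 1
      simp_rw [div_eq_mul_inv, intervalIntegral.integral_const_mul]
      rw [show (∫ x in (1:ℝ)..4, x⁻¹) = Real.log 4 by simpa [one_div] using hlog]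
    rw [hi]
    have hlog4 : Real.log 4 ≠ 0 := ne_of_gt (Real.log_pos (by norm_num))
    simp only [cAnn]
    field_simp
    ring
  rw [h1, zero_mul]

/-- The key radial integral over the annulus. -/
lemma radial_int :
    (∫ p in annulus, (2 * cAnn - cAnn ^ 2 / (p.1 ^ 2 + p.2 ^ 2))) = 0 := by
  set g : ℝ × ℝ → ℝ := fun p => 2 * cAnn - cAnn ^ 2 / (p.1 ^ 2 + p.2 ^ 2) with hg
  have h1 : (∫ p in annulus, g p) = ∫ p, annulus.indicator g p :=
    (integral_indicator meas_ann).symm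
  have h2 : (∫ p, annulus.indicator g p)
      = ∫ p in polarCoord.target, p.1 • annulus.indicator g (polarCoord.symm p) :=
    (integral_comp_polarCoord_symm (annulus.indicator g)).symm
  have h3 : ∀ p ∈ polarCoord.target,
      p.1 • annulus.indicator g (polarCoord.symm p)
        = (Icc (1:ℝ) 4 ×ˢ (univ : Set ℝ)).indicator
            (fun q : ℝ × ℝ => 2 * cAnn * q.1 - cAnn ^ 2 / q.1) p := by
    rintro ⟨r, θ⟩ hp
    have hr : 0 < r := hp.1
    have hsymm : polarCoord.symm (r, θ) = (r * Real.cos θ, r * Real.sin θ) := rfl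
    have hsq : (r * Real.cos θ) ^ 2 + (r * Real.sin θ) ^ 2 = r ^ 2 := by
      have := Real.sin_sq_add_cos_sq θ; nlinarith
    have hmem : polarCoord.symm (r, θ) ∈ annulus ↔ r ∈ Icc (1:ℝ) 4 := by
      rw [hsymm]
      simp only [annulus, mem_setOf_eq, hsq, mem_Icc]
      constructor
      · rintro ⟨h1', h2'⟩
        constructor <;> nlinarith
      · rintro ⟨h1', h2'⟩
        constructor <;> nlinarith
    by_cases hmem' : r ∈ Icc (1:ℝ) 4
    · rw [indicator_of_mem (hmem.mpr hmem'), indicator_of_mem (by simpa using hmem')]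
      simp only [hg, hsymm, hsq, smul_eq_mul]
      field_simp
    · rw [indicator_of_notMem (fun h => hmem' (hmem.mp h)),
        indicator_of_notMem (by simpa using hmem')]
      simp
  have h4 : (∫ p in polarCoord.target, p.1 • annulus.indicator g (polarCoord.symm p))
      = ∫ p in polarCoord.target, (Icc (1:ℝ) 4 ×ˢ (univ : Set ℝ)).indicator
            (fun q : ℝ × ℝ => 2 * cAnn * q.1 - cAnn ^ 2 / q.1) p := by
    apply setIntegral_congr_fun polarCoord.open_target.measurableSet h3
  have hmeasT : MeasurableSet (Icc (1:ℝ) 4 ×ˢ (univ : Set ℝ)) :=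
    measurableSet_Icc.prod MeasurableSet.univ
  have h5 : (∫ p in polarCoord.target, (Icc (1:ℝ) 4 ×ˢ (univ : Set ℝ)).indicator
            (fun q : ℝ × ℝ => 2 * cAnn * q.1 - cAnn ^ 2 / q.1) p)
      = ∫ p in polarCoord.target ∩ (Icc (1:ℝ) 4 ×ˢ (univ : Set ℝ)),
          (2 * cAnn * p.1 - cAnn ^ 2 / p.1) := by
    rw [setIntegral_indicator hmeasT]
  have hset : polarCoord.target ∩ (Icc (1:ℝ) 4 ×ˢ (univ : Set ℝ))
      = Icc (1:ℝ) 4 ×ˢ Ioo (-Real.pi) Real.pi := by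
    have ht : polarCoord.target = Ioi (0:ℝ) ×ˢ Ioo (-Real.pi) Real.pi := rfl
    rw [ht, Set.prod_inter_prod]
    congr 1
    · ext x; simp only [mem_inter_iff, mem_Ioi, mem_Icc]
      constructor
      · rintro ⟨_, h⟩; exact h
      · rintro ⟨h1', h2'⟩; exact ⟨by linarith, h1', h2'⟩
    · simp
  rw [show (∫ p in annulus, (2 * cAnn - cAnn ^ 2 / (p.1 ^ 2 + p.2 ^ 2))) = ∫ p in annulus, g p
      from rfl, h1, h2, h4, h5, hset]
  exact rect_int

theorem stmt_14 :
    (∫ p in annulus, dot2 (Gf p) (Cf p)) = 0 ∧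
    (∫ p in annulus, dot2 (Gf p) (hnf p)) = 0 ∧
    (∫ p in annulus, dot2 (Gf p) (htf p)) = 0 ∧
    (∫ p in annulus, dot2 (Gf p) (etaf p)) = 0 ∧
    (∫ p in annulus, dot2 (Cf p) (hnf p)) = 0 ∧
    (∫ p in annulus, dot2 (Cf p) (htf p)) = 0 ∧
    (∫ p in annulus, dot2 (Cf p) (etaf p)) = 0 ∧
    (∫ p in annulus, dot2 (hnf p) (htf p)) = 0 ∧
    (∫ p in annulus, dot2 (hnf p) (etaf p)) = 0 ∧
    (∫ p in annulus, dot2 (htf p) (etaf p)) = 0 := by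
  have hGC : (∫ p in annulus, dot2 (Gf p) (Cf p)) = 0 := by
    have : ∀ p : ℝ × ℝ, dot2 (Gf p) (Cf p) = 0 := by
      intro p; simp only [dot2, Gf, Cf]; ring
    simp_rw [this, integral_zero]
  have hGht : (∫ p in annulus, dot2 (Gf p) (htf p)) = 0 := by
    have : ∀ p : ℝ × ℝ, dot2 (Gf p) (htf p) = 0 := by
      intro p; simp only [dot2, Gf, htf]; ring
    simp_rw [this, integral_zero]
  have hChn : (∫ p in annulus, dot2 (Cf p) (hnf p)) = 0 := by
    have : ∀ p : ℝ × ℝ, dot2 (Cf p) (hnf p) = 0 := by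
      intro p; simp only [dot2, Cf, hnf]; ring
    simp_rw [this, integral_zero]
  have hhnht : (∫ p in annulus, dot2 (hnf p) (htf p)) = 0 := by
    have : ∀ p : ℝ × ℝ, dot2 (hnf p) (htf p) = 0 := by
      intro p; simp only [dot2, hnf, htf]; ring
    simp_rw [this, integral_zero]
  have hGhn : (∫ p in annulus, dot2 (Gf p) (hnf p)) = 0 := by
    have hcongr : (∫ p in annulus, dot2 (Gf p) (hnf p))
        = ∫ p in annulus, (2 * cAnn - cAnn ^ 2 / (p.1 ^ 2 + p.2 ^ 2)) := by
      apply setIntegral_congr_fun meas_ann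
      intro p hp
      have hs : p.1 ^ 2 + p.2 ^ 2 ≠ 0 := by
        have := hp.1; positivity
      simp only [dot2, Gf, hnf]
      field_simp
    rw [hcongr]; exact radial_int
  have hCht : (∫ p in annulus, dot2 (Cf p) (htf p)) = 0 := by
    have hcongr : (∫ p in annulus, dot2 (Cf p) (htf p))
        = ∫ p in annulus, (2 * cAnn - cAnn ^ 2 / (p.1 ^ 2 + p.2 ^ 2)) := by
      apply setIntegral_congr_fun meas_ann
      intro p hp
      have hs : p.1 ^ 2 + p.2 ^ 2 ≠ 0 := by
        have := hp.1; positivity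
      simp only [dot2, Cf, htf]
      field_simp
      ring
    rw [hcongr]; exact radial_int
  have hGeta : (∫ p in annulus, dot2 (Gf p) (etaf p)) = 0 := by
    apply odd_int
    intro p
    simp only [dot2, Gf, etaf, Prod.fst_neg, Prod.snd_neg]
    ring
  have hCeta : (∫ p in annulus, dot2 (Cf p) (etaf p)) = 0 := by
    apply odd_int
    intro p
    simp only [dot2, Cf, etaf, Prod.fst_neg, Prod.snd_neg]
    ring
  have hhneta : (∫ p in annulus, dot2 (hnf p) (etaf p)) = 0 := by
    apply odd_int
    intro p
    simp only [dot2, hnf, etaf, Prod.fst_neg, Prod.snd_neg]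
    ring
  have hhteta : (∫ p in annulus, dot2 (htf p) (etaf p)) = 0 := by
    apply odd_int
    intro p
    simp only [dot2, htf, etaf, Prod.fst_neg, Prod.snd_neg]
    ring
  exact ⟨hGC, hGhn, hGht, hGeta, hChn, hCht, hCeta, hhnht, hhneta, hhteta⟩
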